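/- Let λ ∈ (0,1) and t ∈ ℝ. For K ≥ 1 let M_K be the K×K real matrix with (M_K)_{1,j} = 1 for all j, (M_K)_{i,j} = λ^t for i ≥ 2 and j ≥ i−1, and (M_K)_{i,j} = 0 otherwise, and set α_K(s) := det(M_K − s·I), with the convention α_0(s) := 1. Then α_1(s) = 1 − s, and for every K ≥ 2 and all s ∈ ℝ the recursion α_K(s) = −s·α_{K−1}(s) − s·λ^t·α_{K−2}(s) holds. -/

import Mathlib

open MeasureTheory Set Filter Topology

/-- The matrix `M_K = (1-lam)^{-t} B^t_K`: first row all `1`, rows `i ≥ 2` have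
`lam^t` in columns `j ≥ i-1`, zeros elsewhere (1-based indexing; `i : Fin K`
corresponds to row `i+1`). -/
noncomputable def MK (lam t : ℝ) (K : ℕ) : Matrix (Fin K) (Fin K) ℝ :=
  fun i j => if i.val = 0 then 1 else if i.val ≤ j.val + 1 then lam ^ t else 0

/-- `α_K(s) = det (M_K - s I)`; for `K = 0` this is `1` (determinant of the empty
matrix), matching the convention `α_0 = 1`. -/
noncomputable def alphaK (lam t : ℝ) (K : ℕ) (s : ℝ) : ℝ :=
  (MK lam t K - s • (1 : Matrix (Fin K) (Fin K) ℝ)).det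

/-- The reversal of `M_K - s I`: lower Hessenberg, with last row all ones. -/
noncomputable def G (lam t s : ℝ) (K : ℕ) : Matrix (Fin K) (Fin K) ℝ :=
  fun i j => (if (i : ℕ) = K - 1 then 1 else if (j : ℕ) ≤ (i : ℕ) + 1 then lam ^ t else 0)
    - (if i = j then s else 0)

lemma alphaK_eq_detG (lam t s : ℝ) (K : ℕ) : alphaK lam t K s = (G lam t s K).det := by
  unfold alphaK
  rw [← Matrix.det_submatrix_equiv_self (Fin.revPerm) (MK lam t K - s • 1)]
  congr 1
  funext i j
  have hi := i.isLt; have hj := j.isLt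
  simp only [Matrix.submatrix_apply, Matrix.sub_apply, Matrix.smul_apply, Matrix.one_apply,
    MK, G, Fin.revPerm_apply, Fin.val_rev, Fin.rev_inj, smul_eq_mul]
  congr 1
  · by_cases h1 : (i : ℕ) = K - 1
    · rw [if_pos (by omega), if_pos h1]
    · rw [if_neg (by omega), if_neg h1]
      by_cases h2 : (j : ℕ) ≤ (i : ℕ) + 1
      · rw [if_pos (by omega), if_pos h2]
      · rw [if_neg (by omega), if_neg h2]
  · by_cases h : i = j <;> simp [h]

lemma G_minor (lam t s : ℝ) (K : ℕ) :
    (G lam t s (K + 1)).submatrix Fin.succ Fin.succ = G lam t s K := by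
  funext i j
  have hi := i.isLt; have hj := j.isLt
  simp only [Matrix.submatrix_apply, G, Fin.val_succ, Fin.succ_inj]
  congr 1
  by_cases h1 : (i : ℕ) = K - 1
  · rw [if_pos (by omega), if_pos h1]
  · rw [if_neg (by omega), if_neg h1]
    by_cases h2 : (j : ℕ) ≤ (i : ℕ) + 1
    · rw [if_pos (by omega), if_pos h2]
    · rw [if_neg (by omega), if_neg h2]

lemma det_updateRow_single (n : ℕ) (M : Matrix (Fin (n + 1)) (Fin (n + 1)) ℝ) (s : ℝ) :
    (M.updateRow 0 (fun j => if j = 0 then s else 0)).det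
      = s * (M.submatrix Fin.succ Fin.succ).det := by
  rw [Matrix.det_succ_row_zero, Fin.sum_univ_succ]
  have hsub : ∀ g : Fin n → Fin (n + 1),
      (M.updateRow 0 (fun j => if j = 0 then s else 0)).submatrix Fin.succ g
        = M.submatrix Fin.succ g := by
    intro g; funext i j
    simp [Matrix.updateRow_apply, (Fin.succ_ne_zero i)]
  simp [hsub, Fin.succ_ne_zero, Fin.succAbove_zero]

lemma H_eq (lam t s : ℝ) (K : ℕ) :
    (G lam t s (K + 2)).submatrix Fin.succ ((1 : Fin (K + 2)).succAbove)
      = (G lam t s (K + 1)).updateRow 0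
          (fun j => G lam t s (K + 1) 0 j + (if j = 0 then s else 0)) := by
  funext i j
  have hi := i.isLt; have hj := j.isLt
  have hsa : (((1 : Fin (K + 2)).succAbove j) : ℕ) = if (j : ℕ) = 0 then 0 else (j : ℕ) + 1 := by
    rcases Nat.eq_zero_or_pos (j : ℕ) with h | h
    · rw [if_pos h, Fin.succAbove_of_castSucc_lt]
      · simp [h]
      · simp [Fin.lt_def, h]
    · rw [if_neg (by omega), Fin.succAbove_of_le_castSucc]
      · simp
      · simp only [Fin.le_def, Fin.val_one, Fin.coe_castSucc]; omega
  have h0 : ((0 : Fin (K + 1)) : ℕ) = 0 := rfl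
  have h0' : ((0 : Fin (K + 2)) : ℕ) = 0 := rfl
  simp only [Matrix.submatrix_apply, Matrix.updateRow_apply, G, Fin.ext_iff, Fin.val_succ,
    h0, h0', hsa]
  split_ifs
  all_goals try rfl
  all_goals try omega
  all_goals try ring
  all_goals exact (by assumption : False).elim

lemma G_rec (lam t s : ℝ) (K : ℕ) :
    (G lam t s (K + 2)).det
      = -s * (G lam t s (K + 1)).det - s * lam ^ t * (G lam t s K).det := by
  rw [Matrix.det_succ_row_zero, Fin.sum_univ_succ, Fin.sum_univ_succ]
  have h00 : G lam t s (K + 2) 0 0 = lam ^ t - s := by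
    simp [G]
  have h01 : G lam t s (K + 2) 0 (Fin.succ 0) = lam ^ t := by
    simp [G, Fin.ext_iff]
  have h0j : ∀ j : Fin K, G lam t s (K + 2) 0 (Fin.succ (Fin.succ j)) = 0 := by
    intro j
    have h0 : ((0 : Fin (K + 2)) : ℕ) = 0 := rfl
    simp only [G, h0, Fin.val_succ, Fin.ext_iff]
    rw [if_neg (by omega), if_neg (by omega), if_neg (by omega)]
    ring
  have hrest : (∑ j : Fin K, (-1 : ℝ) ^ ((Fin.succ (Fin.succ j) : Fin (K+2)) : ℕ)
      * G lam t s (K + 2) 0 (Fin.succ (Fin.succ j))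
      * ((G lam t s (K + 2)).submatrix Fin.succ
          (Fin.succAbove (Fin.succ (Fin.succ j)))).det) = 0 := by
    apply Finset.sum_eq_zero
    intro j _
    rw [h0j j]
    ring
  rw [hrest, h00, h01]
  have hm0 : (G lam t s (K + 2)).submatrix Fin.succ (Fin.succAbove 0) = G lam t s (K + 1) := by
    rw [Fin.succAbove_zero, G_minor]
  have hm1 : ((G lam t s (K + 2)).submatrix Fin.succ (Fin.succAbove (Fin.succ 0))).det
      = (G lam t s (K + 1)).det + s * (G lam t s K).det := by
    have : (Fin.succ (0 : Fin (K+1))) = (1 : Fin (K + 2)) := rfl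
    rw [this, H_eq]
    have hsplit : (fun j => G lam t s (K + 1) 0 j + (if j = 0 then s else 0))
        = (G lam t s (K + 1)) 0 + (fun j => if j = 0 then s else 0) := rfl
    rw [hsplit, Matrix.det_updateRow_add, Matrix.updateRow_eq_self, det_updateRow_single,
      G_minor]
  rw [hm0, hm1]
  simp only [Fin.val_zero, Fin.val_succ, pow_zero, pow_one]
  ring

/-- `α_0(s) = 1` (convention), `α_1(s) = 1 - s`, and for `K ≥ 2`,
`α_K(s) = -s α_{K-1}(s) - s lam^t α_{K-2}(s)`. -/
theorem stmt12 (lam t : ℝ) (h1 : 0 < lam) (h2 : lam < 1) :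
    (∀ s : ℝ, alphaK lam t 0 s = 1) ∧
    (∀ s : ℝ, alphaK lam t 1 s = 1 - s) ∧
    (∀ K : ℕ, 2 ≤ K → ∀ s : ℝ, alphaK lam t K s =
      -s * alphaK lam t (K-1) s - s * lam ^ t * alphaK lam t (K-2) s) := by
  refine ⟨fun s => ?_, fun s => ?_, fun K hK s => ?_⟩
  · simp [alphaK, Matrix.det_fin_zero]
  · rw [alphaK, Matrix.det_fin_one]
    simp [MK, Matrix.one_apply]
  · obtain ⟨K', rfl⟩ : ∃ m, K = m + 2 := ⟨K - 2, by omega⟩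
    simp only [Nat.add_sub_cancel, show K' + 2 - 1 = K' + 1 from rfl]
    rw [alphaK_eq_detG, alphaK_eq_detG, alphaK_eq_detG]
    exact G_rec lam t s K'
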